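/- Let v = (v₁,v₂) : [0,1] → ℝ² be continuous and satisfy the even-odd symmetry v₁(1−x) = v₁(x) and v₂(1−x) = −v₂(x) for all x ∈ [0,1] (equivalently V(1−x) = J₁·V(x)·J₁). Let λ ∈ ℂ and let y : [0,1] → M₂(ℂ) be the unique differentiable solution of J·y'(x) + V(x)·y(x) = λ·y(x) with y(0) = I. Then the monodromy matrix has equal diagonal entries: y(1)₁₁ = y(1)₂₂. Moreover, if y(1)₁₂ = 0 then (y(1)₂₂)² = 1, and if y(1)₂₁ = 0 then (y(1)₁₁)² = 1. -/

import Mathlib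

open Set
open scoped Matrix.Norms.L2Operator

noncomputable section

/-- The matrix `J = [[0,1],[-1,0]]` viewed as a complex matrix. -/
def Jm : Matrix (Fin 2) (Fin 2) ℂ := !![0, 1; -1, 0]

/-- The Zakharov–Shabat potential matrix `V(x) = [[v₁(x), v₂(x)],[v₂(x), -v₁(x)]]`
of a vector function `v = (v₁, v₂)`, viewed as a complex matrix. -/
def ZS (v : ℝ → ℝ × ℝ) (x : ℝ) : Matrix (Fin 2) (Fin 2) ℂ :=
  !![((v x).1 : ℂ), ((v x).2 : ℂ); ((v x).2 : ℂ), -((v x).1 : ℂ)]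

/-- The matrix `J₁ = [[1,0],[0,-1]]` viewed as a complex matrix. -/
def J1m : Matrix (Fin 2) (Fin 2) ℂ := !![1, 0; 0, -1]

/-- The coefficient matrix of the ODE in the form `y' = B·y`. -/
def Bmat (v : ℝ → ℝ × ℝ) (lam : ℂ) (t : ℝ) : Matrix (Fin 2) (Fin 2) ℂ :=
  !![((v t).2 : ℂ), -lam - ((v t).1 : ℂ); lam - ((v t).1 : ℂ), -((v t).2 : ℂ)]

lemma Jm_mul_Jm : Jm * Jm = -1 := by
  ext i j
  fin_cases i <;> fin_cases j <;> simp [Jm, Matrix.mul_apply, Fin.sum_univ_two]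

lemma J1m_mul_J1m : J1m * J1m = 1 := by
  ext i j
  fin_cases i <;> fin_cases j <;> simp [J1m, Matrix.mul_apply, Fin.sum_univ_two, Matrix.one_apply]

lemma Bmat_eq (v : ℝ → ℝ × ℝ) (lam : ℂ) (t : ℝ) :
    Bmat v lam t = lam • (-Jm) + Jm * ZS v t := by
  ext i j
  fin_cases i <;> fin_cases j <;>
    simp [Bmat, Jm, ZS, Matrix.mul_apply, Fin.sum_univ_two] <;> ring

lemma Bmat_decomp (v : ℝ → ℝ × ℝ) (lam : ℂ) (t : ℝ) :
    Bmat v lam t = !![0, -lam; lam, 0] + ((v t).1 : ℂ) • !![0,-1;-1,0]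
      + ((v t).2 : ℂ) • !![1,0;0,-1] := by
  ext i j
  fin_cases i <;> fin_cases j <;> simp [Bmat] <;> ring

lemma ode_matrix (v : ℝ → ℝ × ℝ) (lam : ℂ) (x : ℝ) (Y Y' : Matrix (Fin 2) (Fin 2) ℂ)
    (h : Jm * Y' + ZS v x * Y = lam • Y) : Y' = Bmat v lam x * Y := by
  have h2 : (-Jm) * (Jm * Y') = (-Jm) * (lam • Y - ZS v x * Y) := by
    rw [eq_sub_iff_add_eq.2 h]
  rw [← mul_assoc, neg_mul, Jm_mul_Jm, neg_neg, one_mul] at h2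
  rw [h2, Bmat_eq, add_mul, smul_mul_assoc, mul_sub, mul_smul_comm, mul_assoc, neg_mul,
    neg_mul, sub_eq_add_neg, neg_neg]

lemma key_sym (v : ℝ → ℝ × ℝ) (lam : ℂ) (x : ℝ)
    (h1 : (v (1 - x)).1 = (v x).1) (h2 : (v (1 - x)).2 = -(v x).2) :
    J1m * Bmat v lam (1 - x) = -(Bmat v lam x * J1m) := by
  ext i j
  fin_cases i <;> fin_cases j <;>
    simp [Bmat, J1m, Matrix.mul_apply, Fin.sum_univ_two, h1, h2] <;> ring

lemma hasDerivWithinAt_entry {y : ℝ → Matrix (Fin 2) (Fin 2) ℂ} {Y' : Matrix (Fin 2) (Fin 2) ℂ}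
    {s : Set ℝ} {x : ℝ} (h : HasDerivWithinAt y Y' s x) (i j : Fin 2) :
    HasDerivWithinAt (fun t => y t i j) (Y' i j) s x := by
  let E : Matrix (Fin 2) (Fin 2) ℂ →L[ℂ] ℂ :=
    LinearMap.toContinuousLinearMap (Matrix.entryLinearMap ℂ ℂ i j)
  have h2 := (E.restrictScalars ℝ).hasFDerivAt.comp_hasDerivWithinAt (x := x) h
  exact h2

/-- If the continuous potential `v` has the even-odd symmetry `v₁(1−x) = v₁(x)`,
`v₂(1−x) = −v₂(x)` and `y` solves `J·y' + V·y = λ·y` with `y(0) = I`, then the monodromy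
matrix has equal diagonal entries `y(1)₁₁ = y(1)₂₂`; moreover if `y(1)₁₂ = 0` then
`y(1)₂₂² = 1`, and if `y(1)₂₁ = 0` then `y(1)₁₁² = 1`. -/
theorem stmt10 (v : ℝ → ℝ × ℝ)
    (hv1 : ContinuousOn (fun x => (v x).1) (Icc 0 1))
    (hv2 : ContinuousOn (fun x => (v x).2) (Icc 0 1))
    (hsym : ∀ x ∈ Icc (0 : ℝ) 1, (v (1 - x)).1 = (v x).1 ∧ (v (1 - x)).2 = -(v x).2)
    (lam : ℂ) (y y' : ℝ → Matrix (Fin 2) (Fin 2) ℂ)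
    (hderiv : ∀ x ∈ Icc (0 : ℝ) 1, HasDerivWithinAt y (y' x) (Icc 0 1) x)
    (hode : ∀ x ∈ Icc (0 : ℝ) 1, Jm * y' x + ZS v x * y x = lam • y x)
    (hinit : y 0 = 1) :
    y 1 0 0 = y 1 1 1 ∧
    (y 1 0 1 = 0 → (y 1 1 1) ^ 2 = 1) ∧
    (y 1 1 0 = 0 → (y 1 0 0) ^ 2 = 1) := by
  have hmem : ∀ x ∈ Icc (0 : ℝ) 1, (1 - x) ∈ Icc (0 : ℝ) 1 := by
    intro x hx
    exact ⟨by linarith [hx.2], by linarith [hx.1]⟩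
  have hyB : ∀ x ∈ Icc (0 : ℝ) 1, y' x = Bmat v lam x * y x := fun x hx =>
    ode_matrix v lam x _ _ (hode x hx)
  -- continuity and boundedness of the coefficient matrix
  have hBcont : ContinuousOn (fun t => Bmat v lam t) (Icc 0 1) := by
    simp only [Bmat_decomp]
    exact ((continuousOn_const.add
      ((Complex.continuous_ofReal.comp_continuousOn hv1).smul continuousOn_const)).add
      ((Complex.continuous_ofReal.comp_continuousOn hv2).smul continuousOn_const))
  obtain ⟨C, hC⟩ := isCompact_Icc.exists_bound_of_continuousOn hBcont
  -- the clamped vector field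
  set c : ℝ → ℝ := fun t => min (max t 0) 1 with hc
  have hcmem : ∀ t, c t ∈ Icc (0 : ℝ) 1 :=
    fun t => ⟨le_min (le_max_right t 0) zero_le_one, min_le_right _ _⟩
  have hceq : ∀ x ∈ Icc (0 : ℝ) 1, c x = x := by
    intro x hx
    simp only [hc]
    rw [max_eq_left hx.1, min_eq_left hx.2]
  set F : ℝ → Matrix (Fin 2) (Fin 2) ℂ → Matrix (Fin 2) (Fin 2) ℂ :=
    fun t M => Bmat v lam (c t) * M with hF
  have hLip : ∀ t, LipschitzOnWith C.toNNReal (F t) univ := by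
    intro t
    apply LipschitzOnWith.of_dist_le_mul
    intro M _ N _
    rw [dist_eq_norm, dist_eq_norm, hF]
    calc ‖Bmat v lam (c t) * M - Bmat v lam (c t) * N‖
        = ‖Bmat v lam (c t) * (M - N)‖ := by rw [mul_sub]
      _ ≤ ‖Bmat v lam (c t)‖ * ‖M - N‖ := norm_mul_le _ _
      _ ≤ (C.toNNReal : ℝ) * ‖M - N‖ := by
          gcongr
          exact (hC _ (hcmem t)).trans (Real.le_coe_toNNReal C)
  -- the two solutions
  set w : ℝ → Matrix (Fin 2) (Fin 2) ℂ := fun t => J1m * y (1 - t) * J1m with hw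
  set z : ℝ → Matrix (Fin 2) (Fin 2) ℂ := fun t => y t * (J1m * y 1 * J1m) with hz
  have hwderiv : ∀ x ∈ Icc (0 : ℝ) 1,
      HasDerivWithinAt w (F x (w x)) (Icc 0 1) x := by
    intro x hx
    have hneg : HasDerivWithinAt (fun t : ℝ => 1 - t) (-1 : ℝ) (Icc 0 1) x := by
      simpa using (hasDerivWithinAt_id x (Icc (0:ℝ) 1)).const_sub 1
    have hy1x : HasDerivWithinAt (fun t : ℝ => y (1 - t)) ((-1 : ℝ) • y' (1 - x))
        (Icc 0 1) x :=
      HasDerivWithinAt.scomp (𝕜 := ℝ) (𝕜' := ℝ) x (hderiv (1 - x) (hmem x hx)) hneg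
        (fun t ht => hmem t ht)
    let L : Matrix (Fin 2) (Fin 2) ℂ →L[ℂ] Matrix (Fin 2) (Fin 2) ℂ :=
      LinearMap.toContinuousLinearMap (LinearMap.mulLeft ℂ J1m)
    let R : Matrix (Fin 2) (Fin 2) ℂ →L[ℂ] Matrix (Fin 2) (Fin 2) ℂ :=
      LinearMap.toContinuousLinearMap (LinearMap.mulRight ℂ J1m)
    have h2 := (R.restrictScalars ℝ).hasFDerivAt.comp_hasDerivWithinAt x
      ((L.restrictScalars ℝ).hasFDerivAt.comp_hasDerivWithinAt x hy1x)
    have h3 : HasDerivWithinAt w (J1m * ((-1 : ℝ) • y' (1 - x)) * J1m) (Icc 0 1) x := by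
      exact h2
    have hval : J1m * ((-1 : ℝ) • y' (1 - x)) * J1m = F x (w x) := by
      rw [hyB (1 - x) (hmem x hx), hF]
      simp only [hw]
      rw [hceq x hx]
      have hkey := key_sym v lam x (hsym x hx).1 (hsym x hx).2
      have step1 : J1m * ((-1 : ℝ) • (Bmat v lam (1 - x) * y (1 - x))) * J1m
          = -(J1m * Bmat v lam (1 - x)) * (y (1 - x) * J1m) := by
        rw [neg_one_smul ℝ]
        noncomm_ring
      rw [step1, hkey, neg_neg]
      noncomm_ring
    rw [← hval]
    exact h3
  have hzderiv : ∀ x ∈ Icc (0 : ℝ) 1,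
      HasDerivWithinAt z (F x (z x)) (Icc 0 1) x := by
    intro x hx
    have h2 := (hderiv x hx).mul_const (J1m * y 1 * J1m)
    have hval : y' x * (J1m * y 1 * J1m) = F x (z x) := by
      rw [hyB x hx, hF]
      simp only [hz]
      rw [hceq x hx, mul_assoc]
    rw [← hval]
    exact h2
  -- uniqueness
  have hIci : ∀ (f : ℝ → Matrix (Fin 2) (Fin 2) ℂ) (f' : Matrix (Fin 2) (Fin 2) ℂ)
      (t : ℝ), t ∈ Ico (0:ℝ) 1 → HasDerivWithinAt f f' (Icc 0 1) t →
      HasDerivWithinAt f f' (Ici t) t := by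
    intro f f' t ht h
    exact h.mono_of_mem_nhdsWithin (Icc_mem_nhdsGE_of_mem ht)
  have huniq : EqOn w z (Icc (0:ℝ) 1) := by
    apply ODE_solution_unique_of_mem_Icc_right (v := F) (s := fun _ => univ) (fun t _ => hLip t)
      (fun x hx => (hwderiv x hx).differentiableWithinAt.continuousWithinAt)
      (fun t ht => hIci w _ t ht (hwderiv t (Ico_subset_Icc_self ht)))
      (fun _ _ => trivial)
      (fun x hx => (hzderiv x hx).differentiableWithinAt.continuousWithinAt)
      (fun t ht => hIci z _ t ht (hzderiv t (Ico_subset_Icc_self ht)))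
      (fun _ _ => trivial)
    simp [hw, hz, hinit]
  have hmain : (1 : Matrix (Fin 2) (Fin 2) ℂ) = y 1 * (J1m * y 1 * J1m) := by
    have h1 := huniq (right_mem_Icc.2 zero_le_one)
    simp only [hw, hz, sub_self, hinit] at h1
    rw [← h1, mul_one, J1m_mul_J1m]
  -- the determinant is constant
  have hent : ∀ (i j : Fin 2), ∀ x ∈ Icc (0 : ℝ) 1,
      HasDerivWithinAt (fun t => y t i j) (y' x i j) (Icc 0 1) x := by
    intro i j x hx
    exact hasDerivWithinAt_entry (hderiv x hx) i j
  set D : ℝ → ℂ := fun t => y t 0 0 * y t 1 1 - y t 0 1 * y t 1 0 with hD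
  have hDd : ∀ x ∈ Icc (0 : ℝ) 1, HasDerivWithinAt D 0 (Icc 0 1) x := by
    intro x hx
    have h := ((hent 0 0 x hx).mul (hent 1 1 x hx)).sub
      ((hent 0 1 x hx).mul (hent 1 0 x hx))
    have hB := hyB x hx
    have e : ∀ i j, y' x i j = (Bmat v lam x * y x) i j := fun i j => by rw [hB]
    have e00 := e 0 0
    have e01 := e 0 1
    have e10 := e 1 0
    have e11 := e 1 1
    simp [Bmat, Matrix.mul_apply, Fin.sum_univ_two] at e00 e01 e10 e11
    have hzero : y' x 0 0 * y x 1 1 + y x 0 0 * y' x 1 1 -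
        (y' x 0 1 * y x 1 0 + y x 0 1 * y' x 1 0) = 0 := by
      rw [e00, e01, e10, e11]; ring
    rw [← hzero]
    exact h
  have hDconst := constant_of_has_deriv_right_zero
    (f := D) (a := (0:ℝ)) (b := 1)
    (fun x hx => (hDd x hx).differentiableWithinAt.continuousWithinAt)
    (fun t ht => (hDd t (Ico_subset_Icc_self ht)).mono_of_mem_nhdsWithin
      (Icc_mem_nhdsGE_of_mem ht))
  have hdet : y 1 0 0 * y 1 1 1 - y 1 0 1 * y 1 1 0 = 1 := by
    have := hDconst 1 (right_mem_Icc.2 zero_le_one)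
    simp only [hD, hinit] at this
    simpa [Matrix.one_apply] using this
  -- extract the entry equations
  have e00 := congrFun (congrFun hmain 0) 0
  have e11 := congrFun (congrFun hmain 1) 1
  simp only [Matrix.mul_apply, Fin.sum_univ_two, J1m, Matrix.one_apply, Matrix.cons_val',
    Matrix.cons_val_zero, Matrix.cons_val_one, Matrix.head_cons, Matrix.empty_val',
    Matrix.cons_val_fin_one, Matrix.head_fin_const, Matrix.of_apply, if_true] at e00 e11
  norm_num at e00 e11
  refine ⟨?_, ?_, ?_⟩
  · have hsq : (y 1 0 0 - y 1 1 1) ^ 2 = 0 := by linear_combination -e00 - e11 - 2 * hdet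
    exact sub_eq_zero.1 (pow_eq_zero_iff (n := 2) (by norm_num) |>.1 hsq)
  · intro hb
    linear_combination -e11 + y 1 1 0 * hb
  · intro hc'
    linear_combination -e00 + y 1 0 1 * hc'
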